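/- Let ω⋆ ∈ (0,1), δ = 1 − ω⋆, and let τ_A = γ⋆ − 1 as in the ADMM optimal rate (γ⋆ = 4/(3 − √((2−ρ⋆)/(2+ρ⋆))), ρ⋆ = 2√(1−(ω⋆)²)). Let τ_G ∈ (0,1) satisfy (1−δ)/(1+δ) ≤ τ_G ≤ (2Δ−δ)/(2Δ+δ) for some Δ ≥ 1. Then there exists C = 1 − O(√δ) (as δ → 0) such that C(1 − τ_G) ≤ (1 − τ_A)² ≤ 2ΔC(1 − τ_G). -/

import Mathlib

/-- Optimal ADMM rate as a function of ω⋆. -/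
noncomputable def tauAofOmega (ω : ℝ) : ℝ :=
  4 / (3 - Real.sqrt ((2 - 2 * Real.sqrt (1 - ω^2)) /
        (2 + 2 * Real.sqrt (1 - ω^2)))) - 1

set_option maxHeartbeats 1000000

private lemma aux_poly1 (v : ℝ) (hv0 : 0 ≤ v) :
    (1 - 50*v)*((4*(1 + 2*v))^2) ≤ 16 := by
  nlinarith [hv0, mul_nonneg hv0 hv0, mul_nonneg (mul_nonneg hv0 hv0) hv0]

private lemma aux_poly2 (v : ℝ) (hv0 : 0 ≤ v) (hvh : v ≤ 1/2) :
    8*(2 - v^2)*(1 + v^2) ≤ (1 + 50*v)*(4 - (2*v^2 - v^4))^2 := by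
  have p2 : v^2 ≤ v/2 := by nlinarith
  have p3 : v^3 ≤ v/4 := by nlinarith
  have p6 : v^6 ≤ v/32 := by nlinarith [pow_nonneg hv0 5, pow_nonneg hv0 6]
  have p7 : v^7 ≤ v/64 := by nlinarith [pow_nonneg hv0 6, pow_nonneg hv0 7]
  nlinarith [p2, p3, p6, p7, pow_nonneg hv0 4, pow_nonneg hv0 5,
    pow_nonneg hv0 8, pow_nonneg hv0 9]

private lemma aux_main (δ u s v Δ τG : ℝ)
    (hδ0 : 0 < δ) (hδ4 : δ < 1/4)
    (hv0 : 0 ≤ v) (hv2 : v^2 = δ)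
    (hu0 : 0 ≤ u) (hu2 : u^2 = δ*(2-δ))
    (hs0 : 0 ≤ s) (hs2 : s^2*(2+2*u) = 2-2*u)
    (hΔ : 1 ≤ Δ) (hτ1 : τG < 1)
    (h1 : (1-δ)/(1+δ) ≤ τG) (h2 : τG ≤ (2*Δ-δ)/(2*Δ+δ)) :
    ∃ C : ℝ, |1 - C| ≤ 50*v ∧ C*(1-τG) ≤ ((2-2*s)/(3-s))^2 ∧
      ((2-2*s)/(3-s))^2 ≤ 2*Δ*C*(1-τG) := by
  have hvh : v < 1/2 := by nlinarith
  have huv : u ≤ 2*v := by nlinarith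
  have hu1 : u < 1 := by nlinarith
  have hs1 : s ≤ 1 := by nlinarith
  have hsl : 1 - u ≤ s := by nlinarith
  have hkey : (1 - s^2) * (1 + u) = 2 * u := by linear_combination -hs2/2
  have h3s : (0:ℝ) < 3 - s := by linarith
  refine ⟨(2 - 2*s)^2/(3 - s)^2 * (1 + δ)/(2*δ), ?_, ?_, ?_⟩
  · -- |1 - C| ≤ 50 v
    have hq : (2 - 2*s)^2 * ((1 + u)*(1 + s))^2 = 16*(δ*(2 - δ)) := by
      linear_combination (4*((1 - s^2)*(1 + u) + 2*u))*hkey + 16*hu2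
    have hD0 : (0:ℝ) < ((3 - s)*(1 + u)*(1 + s))^2 := by positivity
    have hCnum : (2 - 2*s)^2/(3 - s)^2 * (1 + δ)/(2*δ) * ((3 - s)*(1 + u)*(1 + s))^2
        = 8*(2 - δ)*(1 + δ) := by
      have expand : (2 - 2*s)^2/(3 - s)^2 * (1 + δ)/(2*δ) * ((3 - s)*(1 + u)*(1 + s))^2
          = (2 - 2*s)^2 * ((1 + u)*(1 + s))^2 * ((1 + δ)/(2*δ)) := by
        field_simp
      rw [expand, hq]; field_simp; ring
    have hA : (3 - s)*(1 + s) ≤ 4 := by nlinarith [sq_nonneg (1 - s)]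
    have hA0 : 0 < (3 - s)*(1 + s) := by nlinarith
    have hB : (1 + u) ≤ 1 + 2*v := by linarith
    have hab : (3 - s)*(1 + u)*(1 + s) ≤ 4*(1 + 2*v) := by
      have h1 := mul_le_mul hA hB (by linarith : (0:ℝ) ≤ 1 + u) (by norm_num : (0:ℝ) ≤ 4)
      rw [mul_right_comm]; exact h1
    have hX : ((3 - s)*(1 + u)*(1 + s))^2 ≤ (4*(1 + 2*v))^2 :=
      pow_le_pow_left₀ (by positivity) hab 2
    have hRlb : (16:ℝ) ≤ 8*(2 - δ)*(1 + δ) := by nlinarith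
    have key_a : (1 - 50*v) * ((3 - s)*(1 + u)*(1 + s))^2 ≤ 8*(2 - δ)*(1 + δ) := by
      rcases le_or_gt (1 - 50*v) 0 with h | h
      · have := mul_nonpos_of_nonpos_of_nonneg h hD0.le
        linarith
      · have h16 := aux_poly1 v hv0
        have := mul_le_mul_of_nonneg_left hX h.le
        linarith
    have hu21 : u^2 < 1 := pow_lt_one₀ hu0 hu1 two_ne_zero
    have hA' : 4 - u^2 ≤ (3 - s)*(1 + s) := by
      have h1s0 : (0:ℝ) ≤ 1 - s := by linarith
      have h1su : (1 - s)^2 ≤ u^2 := pow_le_pow_left₀ h1s0 (by linarith) 2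
      have hexp : (3 - s)*(1 + s) = 4 - (1 - s)^2 - 2*(1 - s) + 2*(1 - s) := by ring
      nlinarith [h1su, hexp]
    have hXlb : (4 - u^2)^2 ≤ ((3 - s)*(1 + u)*(1 + s))^2 := by
      have h1 : 4 - u^2 ≤ (3 - s)*(1 + u)*(1 + s) := by
        have h2 := le_mul_of_one_le_right hA0.le (by linarith : (1:ℝ) ≤ 1 + u)
        rw [mul_right_comm]; linarith
      exact pow_le_pow_left₀ (by linarith) h1 2
    have key_b : 8*(2 - δ)*(1 + δ) ≤ (1 + 50*v) * ((3 - s)*(1 + u)*(1 + s))^2 := by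
      have h16 : 8*(2 - δ)*(1 + δ) ≤ (1 + 50*v)*(4 - u^2)^2 := by
        have hδv : δ = v^2 := hv2.symm
        have huv2 : u^2 = 2*v^2 - v^4 := by rw [hu2, hδv]; ring
        rw [hδv, huv2]
        exact aux_poly2 v hv0 hvh.le
      have := mul_le_mul_of_nonneg_left hXlb (by linarith : (0:ℝ) ≤ 1 + 50*v)
      linarith
    rw [abs_le]
    constructor
    · have hCle : (2 - 2*s)^2/(3 - s)^2 * (1 + δ)/(2*δ) ≤ 1 + 50*v := by
        have h' : (2 - 2*s)^2/(3 - s)^2 * (1 + δ)/(2*δ) * ((3 - s)*(1 + u)*(1 + s))^2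
            ≤ (1 + 50*v) * ((3 - s)*(1 + u)*(1 + s))^2 := by
          rw [hCnum]; exact key_b
        exact le_of_mul_le_mul_right h' hD0
      linarith
    · have hCge : 1 - 50*v ≤ (2 - 2*s)^2/(3 - s)^2 * (1 + δ)/(2*δ) := by
        have h' : (1 - 50*v) * ((3 - s)*(1 + u)*(1 + s))^2
            ≤ (2 - 2*s)^2/(3 - s)^2 * (1 + δ)/(2*δ) * ((3 - s)*(1 + u)*(1 + s))^2 := by
          rw [hCnum]; exact key_a
        exact le_of_mul_le_mul_right h' hD0
      linarith
  · -- C (1-τG) ≤ S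
    rw [div_pow]
    have hS0 : (0:ℝ) ≤ (2 - 2*s)^2 / (3 - s)^2 := by positivity
    have h1' : (1 - δ) ≤ τG * (1 + δ) := by
      have := (div_le_iff₀ (by linarith : (0:ℝ) < 1 + δ)).mp h1
      linarith
    have hfrac : (1 + δ)/(2*δ) * (1 - τG) ≤ 1 := by
      rw [div_mul_eq_mul_div, div_le_one (by linarith)]
      nlinarith
    calc (2 - 2*s)^2/(3 - s)^2 * (1 + δ)/(2*δ) * (1 - τG)
        = (2 - 2*s)^2/(3 - s)^2 * ((1 + δ)/(2*δ) * (1 - τG)) := by ring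
      _ ≤ (2 - 2*s)^2/(3 - s)^2 * 1 := mul_le_mul_of_nonneg_left hfrac hS0
      _ = (2 - 2*s)^2/(3 - s)^2 := by ring
  · -- S ≤ 2 Δ C (1-τG)
    rw [div_pow]
    have hS0 : (0:ℝ) ≤ (2 - 2*s)^2 / (3 - s)^2 := by positivity
    have hden : (0:ℝ) < 2*Δ + δ := by linarith
    have h2' : τG * (2*Δ + δ) ≤ 2*Δ - δ := (le_div_iff₀ hden).mp h2
    have hfrac : 1 ≤ Δ * (1 + δ) * (1 - τG) / δ := by
      rw [le_div_iff₀ hδ0]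
      nlinarith [mul_nonneg (by nlinarith : (0:ℝ) ≤ Δ*δ) (by linarith : (0:ℝ) ≤ 1 - τG)]
    calc (2 - 2*s)^2/(3 - s)^2 = (2 - 2*s)^2/(3 - s)^2 * 1 := by ring
      _ ≤ (2 - 2*s)^2/(3 - s)^2 * (Δ * (1 + δ) * (1 - τG) / δ) :=
          mul_le_mul_of_nonneg_left hfrac hS0
      _ = 2 * Δ * ((2 - 2*s)^2/(3 - s)^2 * (1 + δ)/(2*δ)) * (1 - τG) := by
          field_simp

/-- ADMM speedup: there is an absolute constant K and a threshold δ₀ such that whenever the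
spectral gap δ = 1 − ω⋆ is below δ₀, for every degree ratio Δ ≥ 1 and every τ_G ∈ (0,1)
satisfying the Laplacian comparison bounds, there is C with |1 − C| ≤ K√δ and
C(1 − τ_G) ≤ (1 − τ_A)² ≤ 2ΔC(1 − τ_G). -/
theorem stmt19 :
    ∃ K > (0 : ℝ), ∃ δ₀ > (0 : ℝ), ∀ ω : ℝ, ω ∈ Set.Ioo (0 : ℝ) 1 → 1 - ω < δ₀ →
      ∀ Δ : ℝ, 1 ≤ Δ → ∀ τG ∈ Set.Ioo (0 : ℝ) 1,
        (1 - (1 - ω)) / (1 + (1 - ω)) ≤ τG →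
        τG ≤ (2 * Δ - (1 - ω)) / (2 * Δ + (1 - ω)) →
        ∃ C : ℝ, |1 - C| ≤ K * Real.sqrt (1 - ω) ∧
          C * (1 - τG) ≤ (1 - tauAofOmega ω)^2 ∧
          (1 - tauAofOmega ω)^2 ≤ 2 * Δ * C * (1 - τG) := by
  refine ⟨50, by norm_num, 1/4, by norm_num, ?_⟩
  rintro ω ⟨hω0, hω1⟩ hδ₀ Δ hΔ τG ⟨hτ0, hτ1⟩ h1 h2
  obtain ⟨δ, hδdef⟩ : ∃ δ : ℝ, δ = 1 - ω := ⟨_, rfl⟩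
  have hδ0 : 0 < δ := by rw [hδdef]; linarith
  have hδ4 : δ < 1/4 := by rw [hδdef]; exact hδ₀
  obtain ⟨v, hvdef⟩ : ∃ v : ℝ, v = Real.sqrt (1 - ω) := ⟨_, rfl⟩
  have hv0 : 0 ≤ v := hvdef ▸ Real.sqrt_nonneg _
  have hv2 : v^2 = δ := by
    rw [hvdef, hδdef, Real.sq_sqrt (by linarith)]
  obtain ⟨u, hudef⟩ : ∃ u : ℝ, u = Real.sqrt (1 - ω^2) := ⟨_, rfl⟩
  have hu0 : 0 ≤ u := hudef ▸ Real.sqrt_nonneg _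
  have hu2 : u^2 = δ*(2 - δ) := by
    rw [hudef, Real.sq_sqrt (by nlinarith), hδdef]; ring
  have hu1 : u < 1 := by nlinarith
  obtain ⟨s, hsdef⟩ : ∃ s : ℝ, s = Real.sqrt ((2 - 2*u)/(2 + 2*u)) := ⟨_, rfl⟩
  have hs0 : 0 ≤ s := hsdef ▸ Real.sqrt_nonneg _
  have hs2 : s^2*(2 + 2*u) = 2 - 2*u := by
    rw [hsdef, Real.sq_sqrt (div_nonneg (by linarith) (by linarith))]
    field_simp
  have hs1 : s ≤ 1 := by nlinarith
  have h3s : (0:ℝ) < 3 - s := by linarith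
  have htauA : 1 - tauAofOmega ω = (2 - 2*s)/(3 - s) := by
    rw [tauAofOmega, ← hudef, ← hsdef]
    field_simp
    ring
  obtain ⟨C, hC1, hC2, hC3⟩ := aux_main δ u s v Δ τG hδ0 hδ4 hv0 hv2 hu0 hu2 hs0 hs2 hΔ hτ1
    (by rw [hδdef]; exact h1) (by rw [hδdef]; exact h2)
  refine ⟨C, ?_, ?_, ?_⟩
  · rw [← hvdef]; exact hC1
  · rw [htauA, div_pow]; rw [div_pow] at hC2; exact hC2
  · rw [htauA, div_pow]; rw [div_pow] at hC3; exact hC3
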